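/- Let p ≥ 5 be a prime. The equations n² - nm + m² + m + 1 = 0, k² - kl + l² + l + 1 = 0, and k(m-2n) + l(n-2m-1) - m = 0 have a common solution (n,m,k,l) in (ℤ/p)⁴. In fact one may choose n, m satisfying the first equation with m ≠ 2n, and then l = -(m+2±(m-2n))/2 and k determined by the third equation solve the system. -/
import Mathlib

section aux

variable (p : ℕ) [Fact p.Prime]

lemma aux_two_ne (hp : 5 ≤ p) : (2 : ZMod p) ≠ 0 := by
  have hp2 : p.Prime := Fact.out
  intro h
  have : ((2 : ℕ) : ZMod p) = 0 := by exact_mod_cast h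
  rw [ZMod.natCast_eq_zero_iff] at this
  have := Nat.le_of_dvd (by norm_num) this
  omega

lemma aux_three_ne (hp : 5 ≤ p) : (3 : ZMod p) ≠ 0 := by
  intro h
  have : ((3 : ℕ) : ZMod p) = 0 := by exact_mod_cast h
  rw [ZMod.natCast_eq_zero_iff] at this
  have := Nat.le_of_dvd (by norm_num) this
  omega

open Polynomial in
/-- Auxiliary conic solvability: `x² + 3y² + 8 = 0` has a solution with `y ≠ 0`. -/
lemma aux_conic (hp : 5 ≤ p) :
    ∃ x y : ZMod p, x ^ 2 + 3 * y ^ 2 + 8 = 0 ∧ y ≠ 0 := by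
  have hp2 : p.Prime := Fact.out
  have h2 : (2 : ZMod p) ≠ 0 := aux_two_ne p hp
  have h8 : (8 : ZMod p) ≠ 0 := by
    have : (8 : ZMod p) = 2 * 2 * 2 := by norm_num
    rw [this]
    exact mul_ne_zero (mul_ne_zero h2 h2) h2
  by_cases hsq : ∃ s : ZMod p, s * s = (-8 : ZMod p)
  · obtain ⟨s, hs⟩ := hsq
    refine ⟨-4, s, by linear_combination 3 * hs, fun h0 => ?_⟩
    rw [h0] at hs
    exact h8 (by linear_combination hs)
  · have h3 : (3 : ZMod p) ≠ 0 := aux_three_ne p hp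
    have hcard : Fintype.card (ZMod p) % 2 = 1 := by
      rw [ZMod.card]
      have : p % 2 = 1 := Nat.odd_iff.mp (hp2.odd_of_ne_two (by omega))
      omega
    obtain ⟨a, b, hab⟩ := FiniteField.exists_root_sum_quadratic
      (f := (X : (ZMod p)[X]) ^ 2 + C 8) (g := C 3 * X ^ 2)
      (degree_X_pow_add_C (by norm_num) 8) (degree_C_mul_X_pow 2 h3) hcard
    simp only [eval_add, eval_pow, eval_X, eval_C, eval_mul] at hab
    refine ⟨a, b, by linear_combination hab, fun hb => ?_⟩
    apply hsq
    refine ⟨a, ?_⟩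
    rw [hb] at hab
    linear_combination hab

end aux

/-- For a prime `p ≥ 5`, the compatibility system for realizing the Dynkin
diagram `D₄` over `(ℤ/p)²` has a solution `(n,m,k,l)` in `(ℤ/p)⁴`; moreover one
may choose `n, m` with `m ≠ 2n` and `l = -(m+2±(m-2n))/2`. -/
theorem stmt_6 (p : ℕ) [Fact p.Prime] (hp : 5 ≤ p) :
    ∃ n m k l : ZMod p,
      n ^ 2 - n * m + m ^ 2 + m + 1 = 0 ∧
      k ^ 2 - k * l + l ^ 2 + l + 1 = 0 ∧
      k * (m - 2 * n) + l * (n - 2 * m - 1) - m = 0 ∧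
      m ≠ 2 * n ∧
      (l = -(m + 2 + (m - 2 * n)) / 2 ∨ l = -(m + 2 - (m - 2 * n)) / 2) := by
  have h2 : (2 : ZMod p) ≠ 0 := aux_two_ne p hp
  have h3 : (3 : ZMod p) ≠ 0 := aux_three_ne p hp
  obtain ⟨x, y, hxy, hy⟩ := aux_conic p hp
  set m : ZMod p := (x - 2) / 3 with hmdef
  set n : ZMod p := (m + y) / 2 with hndef
  have hm3 : m * 3 = x - 2 := div_mul_cancel₀ _ h3
  have hn2 : n * 2 = m + y := div_mul_cancel₀ _ h2
  have h12 : (12 : ZMod p) ≠ 0 := by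
    have : (12 : ZMod p) = 2 * 2 * 3 := by norm_num
    rw [this]
    exact mul_ne_zero (mul_ne_zero h2 h2) h3
  have key : (12 : ZMod p) * (n ^ 2 - n * m + m ^ 2 + m + 1) = 0 := by
    linear_combination hxy + (x + 3 * m + 2) * hm3 + 3 * (y + 2 * n - m) * hn2
  have h1 : n ^ 2 - n * m + m ^ 2 + m + 1 = 0 :=
    (mul_eq_zero.mp key).resolve_left h12
  have hne : m ≠ 2 * n := by
    intro h
    exact hy (by linear_combination -hn2 - h)
  have hd : m - 2 * n ≠ 0 := sub_ne_zero.mpr hne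
  refine ⟨n, m, (m - (n - m - 1) * (n - 2 * m - 1)) / (m - 2 * n), n - m - 1,
    h1, ?_, ?_, hne, Or.inl ?_⟩
  · have hk : (m - (n - m - 1) * (n - 2 * m - 1)) / (m - 2 * n) * (m - 2 * n)
        = m - (n - m - 1) * (n - 2 * m - 1) := div_mul_cancel₀ _ hd
    have key2 : (m - 2 * n) ^ 2 *
        (((m - (n - m - 1) * (n - 2 * m - 1)) / (m - 2 * n)) ^ 2
          - ((m - (n - m - 1) * (n - 2 * m - 1)) / (m - 2 * n)) * (n - m - 1)
          + (n - m - 1) ^ 2 + (n - m - 1) + 1) = 0 := by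
      linear_combination
        ((m - (n - m - 1) * (n - 2 * m - 1)) / (m - 2 * n) * (m - 2 * n)
            + (m - (n - m - 1) * (n - 2 * m - 1)) - (n - m - 1) * (m - 2 * n)) * hk
          + (3 * n ^ 2 - 6 * n * m - 2 * n + 2 * m + 3 * m ^ 2 + 1) * h1
    exact (mul_eq_zero.mp key2).resolve_left (pow_ne_zero 2 hd)
  · have hk : (m - (n - m - 1) * (n - 2 * m - 1)) / (m - 2 * n) * (m - 2 * n)
        = m - (n - m - 1) * (n - 2 * m - 1) := div_mul_cancel₀ _ hd
    linear_combination hk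
  · rw [eq_div_iff h2]
    ring
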